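/- A uniformly continuous function f on a locally compact Abelian group G is Stepanov p-almost periodic if and only if it is Bohr almost periodic; i.e. S^p(G) ∩ C_u(G) = SAP(G). -/

import Mathlib

open MeasureTheory Filter Topology
open scoped ENNReal Pointwise

noncomputable section

variable {G : Type*} [AddCommGroup G] [UniformSpace G] [IsUniformAddGroup G]
  [LocallyCompactSpace G] [MeasurableSpace G] [BorelSpace G]

/-- Translation operator: `Tt t f = f (· - t)`. -/
def Tt (t : G) (f : G → ℂ) : G → ℂ := fun x => f (x - t)

/-- Stepanov `p`-norm with respect to the set `K`:
`sup_y ( θ_G(K)⁻¹ ∫_{y+K} |f|^p )^(1/p)`. -/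
def SNorm (μ : Measure G) (K : Set G) (p : ℝ) (f : G → ℂ) : ℝ≥0∞ :=
  ⨆ y : G, ((∫⁻ x in y +ᵥ K, (‖f x‖₊ : ℝ≥0∞) ^ p ∂μ) / μ K) ^ (1 / p)

/-- A set `R ⊆ G` is relatively dense if `R + C = G` for some compact `C`. -/
def RelativelyDense (R : Set G) : Prop :=
  ∃ C : Set G, IsCompact C ∧ R + C = Set.univ

/-- `f` is Stepanov `p`-almost periodic (w.r.t. `K`) if for every `ε > 0` the set of
`ε`-almost periods in the Stepanov norm is relatively dense. -/
def StepanovAP (μ : Measure G) (K : Set G) (p : ℝ) (f : G → ℂ) : Prop :=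
  ∀ ε : ℝ, 0 < ε →
    RelativelyDense {t : G | SNorm μ K p (f - Tt t f) < ENNReal.ofReal ε}

/-- `f ∈ L^p_loc(G)`. -/
def MemLpLoc (μ : Measure G) (p : ℝ) (f : G → ℂ) : Prop :=
  AEStronglyMeasurable f μ ∧
    ∀ C : Set G, IsCompact C → (∫⁻ x in C, (‖f x‖₊ : ℝ≥0∞) ^ p ∂μ) < ⊤

/-- A continuous character of `G`. -/
def IsChar (χ : G → ℂ) : Prop :=
  Continuous χ ∧ (∀ x y, χ (x + y) = χ x * χ y) ∧ ∀ x, ‖χ x‖ = 1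

/-- A trigonometric polynomial: a finite linear combination of continuous characters. -/
def IsTrigPoly (P : G → ℂ) : Prop :=
  ∃ (n : ℕ) (c : Fin n → ℂ) (χ : Fin n → G → ℂ),
    (∀ i, IsChar (χ i)) ∧ P = fun x => ∑ i, c i * χ i x

/-- A van Hove sequence: precompact open sets whose `K`-boundaries are
asymptotically negligible. -/
def IsVanHove (μ : Measure G) (A : ℕ → Set G) : Prop :=
  (∀ n, IsOpen (A n) ∧ IsCompact (closure (A n))) ∧
    ∀ K : Set G, IsCompact K →
      Tendsto (fun n =>
        μ ((closure (A n + K) \ A n) ∪ (((A n)ᶜ - K) ∩ closure (A n))) / μ (A n))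
        atTop (nhds 0)

/-- The Weyl `p`-seminorm along the sequence `A`. -/
def WSemi (μ : Measure G) (A : ℕ → Set G) (p : ℝ) (f : G → ℂ) : ℝ≥0∞ :=
  Filter.limsup (fun n => SNorm μ (A n) p f) atTop

/-- `f` is Weyl `p`-almost periodic w.r.t. `A`: approximable by trigonometric
polynomials in the Weyl seminorm. -/
def WeylAP (μ : Measure G) (A : ℕ → Set G) (p : ℝ) (f : G → ℂ) : Prop :=
  ∀ ε : ℝ, 0 < ε → ∃ P : G → ℂ, IsTrigPoly P ∧ WSemi μ A p (f - P) < ENNReal.ofReal ε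


open scoped Uniformity

lemma relDense_mono {R S : Set G} (h : R ⊆ S) (hR : RelativelyDense R) :
    RelativelyDense S := by
  obtain ⟨C, hC, hRC⟩ := hR
  exact ⟨C, hC, Set.eq_univ_of_univ_subset (hRC ▸ Set.add_subset_add_right h)⟩

lemma vadd_meas (μ : Measure G) [μ.IsAddHaarMeasure] (y : G) (K : Set G) :
    μ (y +ᵥ K) = μ K := by
  have : (y +ᵥ K) = (fun x => -y + x) ⁻¹' K := by
    ext x; simp [Set.mem_vadd_set_iff_neg_vadd_mem]
  rw [this, measure_preimage_add]

lemma snorm_le_of_bound (μ : Measure G) [μ.IsAddHaarMeasure] {p : ℝ} (hp0 : 0 < p)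
    {K : Set G} (hK : IsCompact K) (hK' : (interior K).Nonempty)
    (g : G → ℂ) (c : ℝ) (hg : ∀ x, ‖g x‖ ≤ c) :
    SNorm μ K p g ≤ ENNReal.ofReal c := by
  have hμK0 : μ K ≠ 0 :=
    ((isOpen_interior.measure_pos μ hK').trans_le (measure_mono interior_subset)).ne'
  have hμKtop : μ K ≠ ⊤ := hK.measure_lt_top.ne
  refine iSup_le fun y => ?_
  have h1 : (∫⁻ x in y +ᵥ K, (‖g x‖₊ : ℝ≥0∞) ^ p ∂μ) ≤ ENNReal.ofReal c ^ p * μ K := by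
    calc (∫⁻ x in y +ᵥ K, (‖g x‖₊ : ℝ≥0∞) ^ p ∂μ)
        ≤ ∫⁻ _x in y +ᵥ K, ENNReal.ofReal c ^ p ∂μ := by
          refine lintegral_mono fun x => ?_
          refine ENNReal.rpow_le_rpow ?_ hp0.le
          rw [← enorm_eq_nnnorm, ← ofReal_norm]
          exact ENNReal.ofReal_le_ofReal (hg x)
      _ = ENNReal.ofReal c ^ p * μ (y +ᵥ K) := setLIntegral_const _ _
      _ = ENNReal.ofReal c ^ p * μ K := by rw [vadd_meas]
  calc ((∫⁻ x in y +ᵥ K, (‖g x‖₊ : ℝ≥0∞) ^ p ∂μ) / μ K) ^ (1 / p)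
      ≤ ((ENNReal.ofReal c ^ p * μ K) / μ K) ^ (1 / p) :=
        ENNReal.rpow_le_rpow (ENNReal.div_le_div_right h1 _) (by positivity)
    _ = (ENNReal.ofReal c ^ p) ^ (1 / p) := by
        rw [mul_div_assoc, ENNReal.div_self hμK0 hμKtop, mul_one]
    _ = ENNReal.ofReal c := by
        rw [← ENNReal.rpow_mul, mul_one_div_cancel hp0.ne', ENNReal.rpow_one]

theorem stepanovAP_inter_cu_eq_sap (μ : Measure G) [μ.IsAddHaarMeasure]
    (p : ℝ) (hp : 1 ≤ p) (K : Set G) (hK : IsCompact K) (hK' : (interior K).Nonempty)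
    (f : G → ℂ) (hf : UniformContinuous f) (C : ℝ) (hbd : ∀ x : G, ‖f x‖ ≤ C) :
    StepanovAP μ K p f ↔
      ∀ ε : ℝ, 0 < ε →
        RelativelyDense {t : G | ∀ x : G, ‖f x - f (x - t)‖ ≤ ε} := by
  have hp0 : (0:ℝ) < p := lt_of_lt_of_le one_pos hp
  have hμK0 : μ K ≠ 0 :=
    ((isOpen_interior.measure_pos μ hK').trans_le (measure_mono interior_subset)).ne'
  have hμKtop : μ K ≠ ⊤ := hK.measure_lt_top.ne
  constructor
  · intro hS ε hε
    have h4 : (0:ℝ) < ε/4 := by linarith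
    have hmem : {q : G × G | dist (f q.1) (f q.2) < ε/4} ∈ 𝓤 G :=
      Filter.mem_map.mp (hf (Metric.dist_mem_uniformity h4))
    rw [uniformity_eq_comap_nhds_zero G, Filter.mem_comap] at hmem
    obtain ⟨U, hU, hUsub⟩ := hmem
    obtain ⟨T, hTU, hTopen, hT0⟩ := mem_nhds_iff.mp hU
    have hT : ∀ a b : G, b - a ∈ T → ‖f a - f b‖ < ε/4 := by
      intro a b hab
      have h1 : ((a, b) : G × G) ∈ (fun q : G × G => q.2 - q.1) ⁻¹' U := hTU hab
      have h2 := hUsub h1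
      simpa [dist_eq_norm] using h2
    obtain ⟨u, hu⟩ := hK'
    set W : Set G := ((fun w => u + w) ⁻¹' interior K) ∩ T with hWdef
    have hWopen : IsOpen W :=
      (isOpen_interior.preimage (continuous_const.add continuous_id)).inter hTopen
    have hW0 : (0:G) ∈ W := ⟨by simpa using hu, hT0⟩
    have hμW : 0 < μ W := hWopen.measure_pos μ ⟨0, hW0⟩
    have hμWtop : μ W ≠ ⊤ := by
      have hsub : W ⊆ (fun w => u + w) ⁻¹' K := fun x hx => (interior_subset (Set.mem_preimage.mp hx.1) : u + x ∈ K)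
      have hlt : μ W < ⊤ := calc
        μ W ≤ μ ((fun w => u + w) ⁻¹' K) := measure_mono hsub
        _ = μ K := measure_preimage_add μ u K
        _ < ⊤ := hK.measure_lt_top
      exact hlt.ne
    set ε' : ℝ≥0∞ := ENNReal.ofReal (ε/2) * (μ W / μ K) ^ (1/p) with hε'def
    have hdivpos : 0 < μ W / μ K := ENNReal.div_pos hμW.ne' hμKtop
    have hdivtop : μ W / μ K ≠ ⊤ := (ENNReal.div_lt_top hμWtop hμK0).ne
    have hε'0 : ε' ≠ 0 := by
      refine mul_ne_zero ?_ ?_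
      · exact (ENNReal.ofReal_pos.mpr (by linarith)).ne'
      · exact (ENNReal.rpow_pos hdivpos hdivtop).ne'
    have hε'top : ε' ≠ ⊤ :=
      ENNReal.mul_ne_top ENNReal.ofReal_ne_top
        (ENNReal.rpow_ne_top_of_nonneg (by positivity) hdivtop)
    have key : ∀ t x0 : G, ε < ‖f x0 - f (x0 - t)‖ → ε' ≤ SNorm μ K p (f - Tt t f) := by
      intro t x0 hx0
      set g : G → ℂ := f - Tt t f with hgdef
      have hgx : ∀ x : G, x - x0 ∈ T → ε/2 < ‖g x‖ := by
        intro x hxT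
        have e1 : ‖f x0 - f x‖ < ε/4 := hT x0 x hxT
        have e2 : ‖f (x0 - t) - f (x - t)‖ < ε/4 := by
          refine hT (x0 - t) (x - t) ?_
          have : x - t - (x0 - t) = x - x0 := by abel
          rwa [this]
        have hsplit : g x0 - g x = (f x0 - f x) - (f (x0 - t) - f (x - t)) := by
          simp only [hgdef, Pi.sub_apply, Tt]; ring
        have h2 : ‖g x0 - g x‖ ≤ ‖f x0 - f x‖ + ‖f (x0 - t) - f (x - t)‖ := by
          rw [hsplit]; exact norm_sub_le _ _
        have h1 : ‖g x0‖ - ‖g x‖ ≤ ‖g x0 - g x‖ := norm_sub_norm_le _ _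
        have hgx0 : ε < ‖g x0‖ := by simpa [hgdef, Tt] using hx0
        linarith
      set V : Set G := (fun x => x - x0) ⁻¹' W with hVdef
      have hVopen : IsOpen V := hWopen.preimage (continuous_id.sub continuous_const)
      have hμV : μ V = μ W := by
        have hVeq : V = (fun x => -x0 + x) ⁻¹' W := by
          ext x; simp [hVdef, sub_eq_neg_add, add_comm]
        rw [hVeq, measure_preimage_add]
      have hVK : V ⊆ (x0 - u) +ᵥ K := by
        intro x hx
        rw [Set.mem_vadd_set_iff_neg_vadd_mem]
        have hk : u + (x - x0) ∈ interior K := hx.1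
        have heq : -(x0 - u) +ᵥ x = u + (x - x0) := by
          simp only [vadd_eq_add]; abel
        rw [heq]
        exact interior_subset hk
      have hlow : ENNReal.ofReal (ε/2) ^ p * μ W
          ≤ ∫⁻ x in (x0 - u) +ᵥ K, (‖g x‖₊ : ℝ≥0∞) ^ p ∂μ := by
        calc ENNReal.ofReal (ε/2) ^ p * μ W
            = ∫⁻ _x in V, ENNReal.ofReal (ε/2) ^ p ∂μ := by
              rw [setLIntegral_const, hμV]
          _ ≤ ∫⁻ x in V, (‖g x‖₊ : ℝ≥0∞) ^ p ∂μ := by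
              refine lintegral_mono_ae ?_
              filter_upwards [ae_restrict_mem hVopen.measurableSet] with x hx
              refine ENNReal.rpow_le_rpow ?_ hp0.le
              rw [← enorm_eq_nnnorm, ← ofReal_norm]
              exact ENNReal.ofReal_le_ofReal (hgx x hx.2).le
          _ ≤ _ := lintegral_mono_set hVK
      have hterm : ε' ≤ ((∫⁻ x in (x0 - u) +ᵥ K, (‖g x‖₊ : ℝ≥0∞) ^ p ∂μ) / μ K) ^ (1/p) := by
        have hε'eq : ε' = ((ENNReal.ofReal (ε/2) ^ p * μ W) / μ K) ^ (1/p) := by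
          rw [mul_div_assoc, ENNReal.mul_rpow_of_nonneg _ _ (by positivity : (0:ℝ) ≤ 1/p),
            ← ENNReal.rpow_mul, mul_one_div_cancel hp0.ne', ENNReal.rpow_one]
        rw [hε'eq]
        exact ENNReal.rpow_le_rpow (ENNReal.div_le_div_right hlow _) (by positivity)
      refine hterm.trans ?_
      unfold SNorm
      exact le_iSup (fun y => ((∫⁻ x in y +ᵥ K, (‖g x‖₊ : ℝ≥0∞) ^ p ∂μ) / μ K) ^ (1/p)) (x0 - u)
    set r : ℝ := ε'.toReal with hrdef
    have hr : 0 < r := ENNReal.toReal_pos hε'0 hε'top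
    have hofr : ENNReal.ofReal r = ε' := ENNReal.ofReal_toReal hε'top
    refine relDense_mono ?_ (hS r hr)
    intro t ht x
    by_contra hx
    push_neg at hx
    have h1 : ε' ≤ SNorm μ K p (f - Tt t f) := key t x hx
    have h2 : SNorm μ K p (f - Tt t f) < ε' := by
      rw [← hofr]; exact ht
    exact absurd h1 (not_le.mpr h2)
  · intro hB ε hε
    refine relDense_mono ?_ (hB (ε/2) (by linarith))
    intro t ht
    have h := snorm_le_of_bound μ hp0 hK hK' (f - Tt t f) (ε/2) ?_
    · exact lt_of_le_of_lt h ((ENNReal.ofReal_lt_ofReal_iff hε).mpr (by linarith))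
    · intro x
      simpa [Tt] using ht x
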